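/- arXiv:2210.08393 — 2 statements merged into one kernel-verified Lean document; each statement's English description precedes it below -/
import Mathlib

section
/- Fix a positive integer α ≥ 2 and h > 0. Let H : ℝ → ℝ be twice continuously differentiable supported appropriately with ∫_{-1}^1 H'(ξ)dξ = 1, ∫_{-1}^1 ξ^j H'(ξ)dξ = 0 for 1 ≤ j ≤ α−1, ∫_{-1}^1 ξ H''(ξ)dξ = −1, and ∫_{-1}^1 ξ^j H''(ξ)dξ = 0 for j = 0 and 2 ≤ j ≤ α. Then for any real Δ and any integer k with 1 ≤ k ≤ α−1, ∫_{-1}^{1} (ξh − Δ)^k · ((Δ/h)·H''(ξ) − H'(ξ)) dξ = (k − 1)·(−Δ)^k. -/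
open MeasureTheory

theorem stmt5 (α : ℕ) (hα : 2 ≤ α) (h : ℝ) (hh : 0 < h)
    (H : ℝ → ℝ) (hH : ContDiff ℝ 2 H)
    (hm0 : ∫ ξ in (-1:ℝ)..1, deriv H ξ = 1)
    (hm1 : ∀ j : ℕ, 1 ≤ j → j ≤ α - 1 → ∫ ξ in (-1:ℝ)..1, ξ ^ j * deriv H ξ = 0)
    (hm2 : ∫ ξ in (-1:ℝ)..1, ξ * deriv (deriv H) ξ = -1)
    (hm3 : ∫ ξ in (-1:ℝ)..1, deriv (deriv H) ξ = 0)
    (hm4 : ∀ j : ℕ, 2 ≤ j → j ≤ α → ∫ ξ in (-1:ℝ)..1, ξ ^ j * deriv (deriv H) ξ = 0) :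
    ∀ (Δ : ℝ) (k : ℕ), 1 ≤ k → k ≤ α - 1 →
      ∫ ξ in (-1:ℝ)..1,
          (ξ * h - Δ) ^ k * ((Δ / h) * deriv (deriv H) ξ - deriv H ξ)
        = ((k:ℝ) - 1) * (-Δ) ^ k := by
  intro Δ k hk1 hk2
  have hH1 : Continuous (deriv H) := hH.continuous_deriv one_le_two
  have hH2' : ContDiff ℝ 1 (deriv H) := by
    have := (contDiff_succ_iff_deriv (n := 1)).mp (by exact_mod_cast hH)
    exact this.2.2
  have hH2 : Continuous (deriv (deriv H)) := hH2'.continuous_deriv le_rfl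
  set f : ℝ → ℝ := fun ξ => (Δ / h) * deriv (deriv H) ξ - deriv H ξ with hf_def
  have hf : Continuous f := (continuous_const.mul hH2).sub hH1
  -- the basic moment integrals of f
  have key : ∀ j : ℕ, j ≤ k →
      (∫ ξ in (-1:ℝ)..1, ξ ^ j * f ξ)
        = (if j = 0 then (-1:ℝ) else if j = 1 then -Δ / h else 0) := by
    intro j hj
    have hsplit : (∫ ξ in (-1:ℝ)..1, ξ ^ j * f ξ)
        = (Δ / h) * (∫ ξ in (-1:ℝ)..1, ξ ^ j * deriv (deriv H) ξ)
          - ∫ ξ in (-1:ℝ)..1, ξ ^ j * deriv H ξ := by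
      have h1 : (∫ ξ in (-1:ℝ)..1, ξ ^ j * f ξ)
          = ∫ ξ in (-1:ℝ)..1,
              ((Δ / h) * (ξ ^ j * deriv (deriv H) ξ) - ξ ^ j * deriv H ξ) := by
        apply intervalIntegral.integral_congr
        intro ξ _
        simp [hf_def]; ring
      rw [h1, intervalIntegral.integral_sub, intervalIntegral.integral_const_mul]
      · exact (continuous_const.mul ((continuous_pow j).mul hH2)).intervalIntegrable _ _
      · exact ((continuous_pow j).mul hH1).intervalIntegrable _ _
    rw [hsplit]
    match j, hj with
    | 0, _ =>
      have e1 : (∫ ξ in (-1:ℝ)..1, ξ ^ 0 * deriv (deriv H) ξ) = 0 := by simpa using hm3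
      have e2 : (∫ ξ in (-1:ℝ)..1, ξ ^ 0 * deriv H ξ) = 1 := by simpa using hm0
      rw [e1, e2]; simp
    | 1, _ =>
      have e1 : (∫ ξ in (-1:ℝ)..1, ξ ^ 1 * deriv (deriv H) ξ) = -1 := by simpa using hm2
      have e2 : (∫ ξ in (-1:ℝ)..1, ξ ^ 1 * deriv H ξ) = 0 := by
        simpa using hm1 1 le_rfl (by omega)
      rw [e1, e2]; simp; ring
    | (m+2), hj =>
      have e1 : (∫ ξ in (-1:ℝ)..1, ξ ^ (m+2) * deriv (deriv H) ξ) = 0 :=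
        hm4 (m+2) (by omega) (by omega)
      have e2 : (∫ ξ in (-1:ℝ)..1, ξ ^ (m+2) * deriv H ξ) = 0 :=
        hm1 (m+2) (by omega) (by omega)
      simp [e1, e2]
  have hexp : ∀ ξ : ℝ, (ξ * h - Δ) ^ k * f ξ
      = ∑ j ∈ Finset.range (k+1),
          (h ^ j * (-Δ) ^ (k - j) * (k.choose j : ℝ)) * (ξ ^ j * f ξ) := by
    intro ξ
    have : (ξ * h - Δ) = ξ * h + (-Δ) := by ring
    rw [this, add_pow, Finset.sum_mul]
    refine Finset.sum_congr rfl fun j _ => by ring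
  have hint : ∀ j ∈ Finset.range (k+1), IntervalIntegrable
      (fun ξ => (h ^ j * (-Δ) ^ (k - j) * (k.choose j : ℝ)) * (ξ ^ j * f ξ))
      volume (-1:ℝ) 1 := fun j _ =>
    (continuous_const.mul ((continuous_pow j).mul hf)).intervalIntegrable _ _
  calc (∫ ξ in (-1:ℝ)..1, (ξ * h - Δ) ^ k * ((Δ / h) * deriv (deriv H) ξ - deriv H ξ))
      = ∫ ξ in (-1:ℝ)..1, ∑ j ∈ Finset.range (k+1),
          (h ^ j * (-Δ) ^ (k - j) * (k.choose j : ℝ)) * (ξ ^ j * f ξ) := by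
        exact intervalIntegral.integral_congr fun ξ _ => hexp ξ
    _ = ∑ j ∈ Finset.range (k+1), ∫ ξ in (-1:ℝ)..1,
          (h ^ j * (-Δ) ^ (k - j) * (k.choose j : ℝ)) * (ξ ^ j * f ξ) :=
        intervalIntegral.integral_finset_sum hint
    _ = ∑ j ∈ Finset.range (k+1),
          (h ^ j * (-Δ) ^ (k - j) * (k.choose j : ℝ)) *
            (if j = 0 then (-1:ℝ) else if j = 1 then -Δ / h else 0) := by
        refine Finset.sum_congr rfl fun j hj => ?_
        rw [intervalIntegral.integral_const_mul, key j (by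
          simpa [Nat.lt_succ_iff] using Finset.mem_range.mp hj)]
    _ = ((k:ℝ) - 1) * (-Δ) ^ k := by
        rw [Finset.range_eq_Ico,
          ← Finset.sum_Ico_consecutive _ (by omega : 0 ≤ 2) (by omega : 2 ≤ k+1)]
        have hrest : (∑ j ∈ Finset.Ico 2 (k+1),
            (h ^ j * (-Δ) ^ (k - j) * (k.choose j : ℝ)) *
              (if j = 0 then (-1:ℝ) else if j = 1 then -Δ / h else 0)) = 0 := by
          refine Finset.sum_eq_zero fun j hj => ?_
          have := (Finset.mem_Ico.mp hj).1
          rw [if_neg (by omega), if_neg (by omega), mul_zero]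
        rw [hrest, add_zero]
        have h2 : Finset.Ico 0 2 = ({0, 1} : Finset ℕ) := by decide
        rw [h2]
        rw [Finset.sum_insert (by decide), Finset.sum_singleton]
        have hkk : k - 1 + 1 = k := Nat.succ_pred_eq_of_pos hk1
        have hpow : (-Δ) ^ (k - 1) * (-Δ) = (-Δ) ^ k := by
          rw [← pow_succ, hkk]
        simp only [if_pos rfl, if_neg (by omega : (1:ℕ) ≠ 0), if_pos rfl,
          pow_zero, Nat.choose_zero_right, Nat.choose_one_right, Nat.sub_zero,
          pow_one, Nat.cast_one, Nat.cast_ofNat, ite_true, if_neg (by omega : (0:ℕ) ≠ 1)]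
        field_simp
        rw [← hpow]
        ring
end

section
/- Under the same moment conditions on H' and H'' as before, for k = α: ∫_{-1}^{1} (ξh − Δ)^α · ((Δ/h)·H''(ξ) − H'(ξ)) dξ = (α − 1)·(−Δ)^α − π_U · h^α, where π_U := ∫_{-1}^{1} ξ^α H'(ξ) dξ. -/
open MeasureTheory

theorem stmt6 (α : ℕ) (hα : 2 ≤ α) (h : ℝ) (hh : 0 < h)
    (H : ℝ → ℝ) (hH : ContDiff ℝ 2 H)
    (hm0 : ∫ ξ in (-1:ℝ)..1, deriv H ξ = 1)
    (hm1 : ∀ j : ℕ, 1 ≤ j → j ≤ α - 1 → ∫ ξ in (-1:ℝ)..1, ξ ^ j * deriv H ξ = 0)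
    (hm2 : ∫ ξ in (-1:ℝ)..1, ξ * deriv (deriv H) ξ = -1)
    (hm3 : ∫ ξ in (-1:ℝ)..1, deriv (deriv H) ξ = 0)
    (hm4 : ∀ j : ℕ, 2 ≤ j → j ≤ α → ∫ ξ in (-1:ℝ)..1, ξ ^ j * deriv (deriv H) ξ = 0)
    (πU : ℝ) (hπU : πU = ∫ ξ in (-1:ℝ)..1, ξ ^ α * deriv H ξ) :
    ∀ Δ : ℝ,
      ∫ ξ in (-1:ℝ)..1,
          (ξ * h - Δ) ^ α * ((Δ / h) * deriv (deriv H) ξ - deriv H ξ)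
        = ((α:ℝ) - 1) * (-Δ) ^ α - πU * h ^ α := by
  intro Δ
  have hc1 : Continuous (deriv H) := hH.continuous_deriv one_le_two
  have hC2 : ContDiff ℝ 1 (deriv H) := by
    have h2 : ContDiff ℝ (((1:ℕ):ℕ∞) + 1) H := by norm_cast
    exact ((contDiff_succ_iff_deriv).mp h2).2.2
  have hc2 : Continuous (deriv (deriv H)) := hC2.continuous_deriv le_rfl
  set g1 := deriv H with hg1
  set g2 := deriv (deriv H) with hg2
  -- pointwise binomial expansion
  have key : ∀ ξ : ℝ, (ξ * h - Δ) ^ α * ((Δ / h) * g2 ξ - g1 ξ)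
      = ∑ j ∈ Finset.range (α + 1),
          ((α.choose j : ℝ) * h ^ j * (-Δ) ^ (α - j)) *
            (ξ ^ j * ((Δ / h) * g2 ξ - g1 ξ)) := by
    intro ξ
    rw [show ξ * h - Δ = ξ * h + (-Δ) by ring, add_pow, Finset.sum_mul]
    refine Finset.sum_congr rfl fun j _ => by ring
  have hcont : ∀ j : ℕ, Continuous fun ξ : ℝ =>
      ((α.choose j : ℝ) * h ^ j * (-Δ) ^ (α - j)) *
        (ξ ^ j * ((Δ / h) * g2 ξ - g1 ξ)) := by
    intro j
    exact continuous_const.mul ((continuous_pow j).mul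
      ((continuous_const.mul hc2).sub hc1))
  rw [intervalIntegral.integral_congr (fun ξ _ => key ξ),
    intervalIntegral.integral_finset_sum
      (fun j _ => (hcont j).intervalIntegrable _ _)]
  -- evaluate each term
  have hint2 : ∀ j : ℕ, IntervalIntegrable (fun ξ : ℝ => ξ ^ j * g2 ξ)
      volume (-1) 1 := fun j => ((continuous_pow j).mul hc2).intervalIntegrable _ _
  have hint1 : ∀ j : ℕ, IntervalIntegrable (fun ξ : ℝ => ξ ^ j * g1 ξ)
      volume (-1) 1 := fun j => ((continuous_pow j).mul hc1).intervalIntegrable _ _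
  set M : ℕ → ℝ := fun j => (Δ / h) * (∫ ξ in (-1:ℝ)..1, ξ ^ j * g2 ξ)
      - ∫ ξ in (-1:ℝ)..1, ξ ^ j * g1 ξ with hM
  have term : ∀ j : ℕ,
      (∫ ξ in (-1:ℝ)..1, ((α.choose j : ℝ) * h ^ j * (-Δ) ^ (α - j)) *
        (ξ ^ j * ((Δ / h) * g2 ξ - g1 ξ)))
      = ((α.choose j : ℝ) * h ^ j * (-Δ) ^ (α - j)) * M j := by
    intro j
    rw [hM, intervalIntegral.integral_const_mul]
    congr 1
    have : (fun ξ : ℝ => ξ ^ j * ((Δ / h) * g2 ξ - g1 ξ))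
        = fun ξ : ℝ => (Δ / h) * (ξ ^ j * g2 ξ) - ξ ^ j * g1 ξ := by
      funext ξ; ring
    rw [this, intervalIntegral.integral_sub (((hint2 j).const_mul _)) (hint1 j),
      intervalIntegral.integral_const_mul]
  rw [Finset.sum_congr rfl fun j _ => term j]
  -- moment values
  have hM0 : M 0 = -1 := by
    simp only [hM, pow_zero, one_mul, hm3, hm0]; ring
  have hM1 : M 1 = -(Δ / h) := by
    have e1 : ∫ ξ in (-1:ℝ)..1, ξ ^ 1 * g2 ξ = -1 := by
      simpa [pow_one] using hm2
    have e2 : ∫ ξ in (-1:ℝ)..1, ξ ^ 1 * g1 ξ = 0 :=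
      hm1 1 le_rfl (by omega)
    simp only [hM, e1, e2]; ring
  have hMmid : ∀ j : ℕ, 2 ≤ j → j < α → M j = 0 := by
    intro j h2 hj
    have e1 := hm4 j h2 (le_of_lt hj)
    have e2 := hm1 j (by omega) (by omega)
    simp only [hM, e1, e2]; ring
  have hMα : M α = -πU := by
    have e1 := hm4 α hα le_rfl
    simp only [hM, e1, hπU]; ring
  -- split the sum
  rw [Finset.sum_range_succ]
  have hsplit : ∑ j ∈ Finset.range α,
      ((α.choose j : ℝ) * h ^ j * (-Δ) ^ (α - j)) * M j
      = (∑ j ∈ Finset.range 2,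
          ((α.choose j : ℝ) * h ^ j * (-Δ) ^ (α - j)) * M j)
        + ∑ j ∈ Finset.Ico 2 α,
          ((α.choose j : ℝ) * h ^ j * (-Δ) ^ (α - j)) * M j := by
    rw [Finset.range_eq_Ico, ← Finset.sum_Ico_consecutive _ (by omega : 0 ≤ 2) hα, Finset.range_eq_Ico]
  rw [hsplit]
  have hmid : ∑ j ∈ Finset.Ico 2 α,
      ((α.choose j : ℝ) * h ^ j * (-Δ) ^ (α - j)) * M j = 0 := by
    refine Finset.sum_eq_zero fun j hj => ?_
    rw [Finset.mem_Ico] at hj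
    rw [hMmid j hj.1 hj.2, mul_zero]
  rw [hmid]
  simp only [Finset.sum_range_succ, Finset.sum_range_one]
  rw [hM0, hM1, hMα]
  have hne : h ≠ 0 := ne_of_gt hh
  have hα1 : (-Δ) ^ (α - 1) * (-Δ) = (-Δ) ^ α := by
    rw [← pow_succ]; congr 1; omega
  have e : (α : ℝ) * h ^ 1 * (-Δ) ^ (α - 1) * (-(Δ / h)) = (α : ℝ) * (-Δ) ^ α := by
    rw [← hα1]; field_simp
  simp only [Nat.choose_zero_right, Nat.choose_one_right, Nat.choose_self,
    Nat.sub_zero, Nat.sub_self, pow_zero, pow_one, Nat.cast_one]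
  have e' : (α : ℝ) * h * (-Δ) ^ (α - 1) * (-(Δ / h)) = (α : ℝ) * (-Δ) ^ α := by
    simpa using e
  linear_combination e'
end
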